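/- For all integers m ≥ 1 and all θ with cos θ ∈ (0,1), the sum ∑_{n=1}^{m} U_n(cos θ)·(cos θ)^n equals (cos²θ/sin²θ)·[1 − (cos θ)^{m−1}·cos((m+1)θ)], where U_n is the Chebyshev polynomial of the second kind; in particular this sum is strictly positive. -/

import Mathlib

open Real Polynomial Finset

lemma cheb_key (θ : ℝ) (hs : Real.sin θ ≠ 0) (m : ℕ) (hm : 1 ≤ m) :
    (∑ n ∈ Finset.Icc 1 m,
        (Polynomial.Chebyshev.U ℝ (n : ℤ)).eval (Real.cos θ) * (Real.cos θ) ^ n)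
      = (Real.cos θ) ^ 2 / (Real.sin θ) ^ 2 *
          (1 - (Real.cos θ) ^ (m - 1) * Real.cos ((m + 1) * θ)) := by
  induction m, hm using Nat.le_induction with
  | base =>
    simp only [Finset.Icc_self, Finset.sum_singleton]
    have hU := Polynomial.Chebyshev.U_real_cos θ 1
    push_cast at hU ⊢
    have hU' : (Polynomial.Chebyshev.U ℝ (1 : ℤ)).eval (Real.cos θ)
        = Real.sin ((1 + 1) * θ) / Real.sin θ := (eq_div_iff hs).mpr hU
    rw [hU']
    have h2 : ((1:ℝ) + 1) * θ = 2 * θ := by ring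
    rw [h2, Real.sin_two_mul, Real.cos_two_mul']
    norm_num
    field_simp
    linear_combination (Real.cos θ ^ 2) * Real.sin_sq_add_cos_sq θ
  | succ m hm ih =>
    obtain ⟨k, rfl⟩ : ∃ k, m = k + 1 := ⟨m - 1, by omega⟩
    rw [Finset.sum_Icc_succ_top (by omega : 1 ≤ k + 1 + 1), ih]
    have hU := Polynomial.Chebyshev.U_real_cos θ (k + 2)
    push_cast at hU
    have hU' : (Polynomial.Chebyshev.U ℝ (((k + 1 + 1 : ℕ)) : ℤ)).eval (Real.cos θ)
        = Real.sin (((k : ℝ) + 3) * θ) / Real.sin θ := by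
      push_cast
      rw [eq_div_iff hs]
      convert hU using 3
      ring
      ring
    rw [hU']
    have hcos : Real.cos (((k : ℝ) + 2) * θ)
        = Real.cos (((k : ℝ) + 3) * θ) * Real.cos θ
          + Real.sin (((k : ℝ) + 3) * θ) * Real.sin θ := by
      rw [← Real.cos_sub]
      ring_nf
    simp only [Nat.add_sub_cancel]
    push_cast
    rw [show ((k:ℝ)+1+1)*θ = ((k:ℝ)+2)*θ by ring, show ((k:ℝ)+1+1+1)*θ = ((k:ℝ)+3)*θ by ring,
      hcos]
    field_simp
    ring

/-- For all integers `m ≥ 1` and all `θ` with `cos θ ∈ (0,1)`, the partial sum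
`∑_{n=1}^m U_n(cos θ) (cos θ)^n` of Chebyshev polynomials of the second kind equals
`(cos²θ / sin²θ) · (1 − (cos θ)^{m−1} cos((m+1)θ))`, and in particular is strictly positive. -/
theorem chebyshev_partial_sum (θ : ℝ) (h0 : 0 < Real.cos θ) (h1 : Real.cos θ < 1)
    (m : ℕ) (hm : 1 ≤ m) :
    (∑ n ∈ Finset.Icc 1 m,
        (Polynomial.Chebyshev.U ℝ (n : ℤ)).eval (Real.cos θ) * (Real.cos θ) ^ n)
      = (Real.cos θ) ^ 2 / (Real.sin θ) ^ 2 *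
          (1 - (Real.cos θ) ^ (m - 1) * Real.cos ((m + 1) * θ)) ∧
    0 < ∑ n ∈ Finset.Icc 1 m,
        (Polynomial.Chebyshev.U ℝ (n : ℤ)).eval (Real.cos θ) * (Real.cos θ) ^ n := by
  have hs2 : 0 < Real.sin θ ^ 2 := by nlinarith [Real.sin_sq_add_cos_sq θ]
  have hs : Real.sin θ ≠ 0 := fun h => by simp [h] at hs2
  have key := cheb_key θ hs m hm
  refine ⟨key, ?_⟩
  rw [key]
  have hlt : (Real.cos θ) ^ (m - 1) * Real.cos ((m + 1) * θ) < 1 := by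
    rcases eq_or_lt_of_le hm with h | h
    · subst h
      simp only [Nat.sub_self, pow_zero, one_mul]
      push_cast
      rw [show ((1:ℝ)+1)*θ = 2*θ by ring, Real.cos_two_mul]
      nlinarith
    · have hp : (Real.cos θ) ^ (m - 1) < 1 := pow_lt_one₀ (le_of_lt h0) h1 (by omega)
      calc (Real.cos θ) ^ (m - 1) * Real.cos ((m + 1) * θ)
          ≤ (Real.cos θ) ^ (m - 1) * 1 :=
            mul_le_mul_of_nonneg_left (Real.cos_le_one _) (by positivity)
        _ < 1 := by linarith
  have h2 : 0 < 1 - (Real.cos θ) ^ (m - 1) * Real.cos ((m + 1) * θ) := by linarith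
  positivity
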